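/- Let 𝔇 ≥ 1 be an integer and q an odd positive integer. Let c₁, c₂, d₁, d₂ and c₁′, c₂′, d₁′, d₂′ be integers with associated coefficients (A, B, C₀, D₀, E) and (A′, B′, C₀′, D₀′, E′) given by A = c₁² + 𝔇c₂², B = 𝔇A, C₀ = 2(c₁d₁ + 𝔇c₂d₂), D₀ = 2𝔇(c₁d₂ − c₂d₁), E = A + d₁² + 𝔇d₂² (and similarly for the primed data), and let ξ, ζ, ξ′, ζ′ be any integers. Then |S(q)| ≤ 𝔇 · gcd(q, A) · gcd(q, A′) / q, where S(q) = ∑_{r mod q, gcd(r,q)=1} S_{A,B,C₀,D₀}(q, r, ξ, ζ) · conj(S_{A′,B′,C₀′,D₀′}(q, r, ξ′, ζ′)) · e_q((E − E′)r). -/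

import Mathlib

/-- `e_q(t) = exp(2πit/q)`. -/
noncomputable def eq' (q : ℕ) (t : ℤ) : ℂ :=
  Complex.exp (2 * Real.pi * Complex.I * t / q)

/-- The normalized complete exponential sum
`S_{A,B,C,D}(q, r, ξ, ζ) = q⁻² ∑_{x₀,y₀ mod q} e_q(r(Ax₀² + Cx₀) − ξx₀) e_q(r(By₀² + Dy₀) − ζy₀)`. -/
noncomputable def Snorm (q : ℕ) (A B C D ξ ζ r : ℤ) : ℂ :=
  ((q : ℂ) ^ 2)⁻¹ * ∑ x ∈ Finset.range q, ∑ y ∈ Finset.range q,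
    eq' q (r * (A * (x : ℤ) ^ 2 + C * (x : ℤ)) - ξ * (x : ℤ))
      * eq' q (r * (B * (y : ℤ) ^ 2 + D * (y : ℤ)) - ζ * (y : ℤ))

/-- Coefficients of the shifted binary quadratic form attached to `(c₁, c₂, d₁, d₂)`. -/
def coA (𝔇 : ℕ) (c₁ c₂ : ℤ) : ℤ := c₁ ^ 2 + (𝔇 : ℤ) * c₂ ^ 2
def coC (𝔇 : ℕ) (c₁ c₂ d₁ d₂ : ℤ) : ℤ := 2 * (c₁ * d₁ + (𝔇 : ℤ) * c₂ * d₂)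
def coD (𝔇 : ℕ) (c₁ c₂ d₁ d₂ : ℤ) : ℤ := 2 * (𝔇 : ℤ) * (c₁ * d₂ - c₂ * d₁)
def coE (𝔇 : ℕ) (c₁ c₂ d₁ d₂ : ℤ) : ℤ :=
  c₁ ^ 2 + (𝔇 : ℤ) * c₂ ^ 2 + d₁ ^ 2 + (𝔇 : ℤ) * d₂ ^ 2

/-- The averaged sum `S(q) = ∑'_{r mod q} S_{A,...}(q,r,ξ,ζ) conj(S_{A',...}(q,r,ξ',ζ'))
e_q((E − E')r)`, where `∑'` runs over residues coprime to `q`. -/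
noncomputable def Savg (𝔇 : ℕ) (c₁ c₂ d₁ d₂ c₁' c₂' d₁' d₂' ξ ζ ξ' ζ' : ℤ) (q : ℕ) : ℂ :=
  ∑ r ∈ (Finset.range q).filter (fun r => Nat.Coprime r q),
    Snorm q (coA 𝔇 c₁ c₂) ((𝔇 : ℤ) * coA 𝔇 c₁ c₂) (coC 𝔇 c₁ c₂ d₁ d₂)
        (coD 𝔇 c₁ c₂ d₁ d₂) ξ ζ (r : ℤ)
      * (starRingEnd ℂ) (Snorm q (coA 𝔇 c₁' c₂') ((𝔇 : ℤ) * coA 𝔇 c₁' c₂')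
          (coC 𝔇 c₁' c₂' d₁' d₂') (coD 𝔇 c₁' c₂' d₁' d₂') ξ' ζ' (r : ℤ))
      * eq' q ((coE 𝔇 c₁ c₂ d₁ d₂ - coE 𝔇 c₁' c₂' d₁' d₂') * (r : ℤ))

lemma eq'_add (q : ℕ) (a b : ℤ) : eq' q (a + b) = eq' q a * eq' q b := by
  rw [eq', eq', eq', ← Complex.exp_add]
  congr 1
  push_cast
  ring

lemma abs_eq' (q : ℕ) (t : ℤ) : ‖eq' q t‖ = 1 := by
  rw [eq']
  have h : 2 * Real.pi * Complex.I * t / q = ((2 * Real.pi * t / q : ℝ) : ℂ) * Complex.I := by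
    push_cast; ring
  rw [h, Complex.norm_exp_ofReal_mul_I]

lemma eq'_conj (q : ℕ) (t : ℤ) : (starRingEnd ℂ) (eq' q t) = eq' q (-t) := by
  rw [eq', eq', ← Complex.exp_conj]
  congr 1
  simp only [map_div₀, map_mul, Complex.conj_I, Complex.conj_ofNat, Complex.conj_natCast,
    map_intCast, Complex.conj_ofReal]
  push_cast
  ring

lemma eq'_one (q : ℕ) (hq : 0 < q) (t : ℤ) (h : (q : ℤ) ∣ t) : eq' q t = 1 := by
  obtain ⟨s, rfl⟩ := h
  rw [eq']
  have hq' : (q : ℂ) ≠ 0 := Nat.cast_ne_zero.2 hq.ne'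
  have h : 2 * Real.pi * Complex.I * (((q : ℤ) * s : ℤ) : ℂ) / q
      = (s : ℤ) * (2 * Real.pi * Complex.I) := by
    push_cast
    field_simp
  rw [h, Complex.exp_int_mul_two_pi_mul_I]

lemma eq'_shift (q : ℕ) (hq : 0 < q) (t s : ℤ) : eq' q (t + q * s) = eq' q t := by
  rw [eq'_add, eq'_one q hq _ ⟨s, rfl⟩, mul_one]

lemma eq'_pow (q : ℕ) (m : ℤ) (x : ℕ) : eq' q (m * x) = (eq' q m) ^ x := by
  rw [eq', eq', ← Complex.exp_nat_mul]
  congr 1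
  push_cast
  ring

lemma sum_eq' (q : ℕ) (hq : 0 < q) (m : ℤ) :
    ∑ x ∈ Finset.range q, eq' q (m * x) = if (q : ℤ) ∣ m then (q : ℂ) else 0 := by
  simp only [eq'_pow]
  by_cases h : (q : ℤ) ∣ m
  · rw [if_pos h, eq'_one q hq m h]
    simp
  · rw [if_neg h]
    have hz1 : eq' q m ≠ 1 := by
      intro hz
      rw [eq', Complex.exp_eq_one_iff] at hz
      obtain ⟨n, hn⟩ := hz
      have hq' : (q : ℂ) ≠ 0 := Nat.cast_ne_zero.2 hq.ne'
      have hπ : (2 * (Real.pi : ℂ) * Complex.I) ≠ 0 := by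
        simp [Real.pi_ne_zero, Complex.I_ne_zero]
      have h2 : (m : ℂ) = n * q := by
        field_simp at hn
        have : (2 * (Real.pi : ℂ) * Complex.I) * m = (2 * (Real.pi : ℂ) * Complex.I) * (n * q) := by
          linear_combination (2 * (Real.pi : ℂ) * Complex.I) * hn
        exact mul_left_cancel₀ hπ this
      have : m = n * q := by exact_mod_cast h2
      exact h ⟨n, by linarith [this]⟩
    rw [geom_sum_eq hz1]
    have hzq : eq' q m ^ q = 1 := by
      rw [← eq'_pow, mul_comm, eq'_one q hq _ ⟨m, by push_cast; ring⟩]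
    rw [hzq, sub_self, zero_div]

lemma sum_shift1 (q : ℕ) (g : ℤ → ℂ) (hg : ∀ t : ℤ, g (t + q) = g t) :
    ∑ x ∈ Finset.range q, g ((x : ℤ) + 1) = ∑ x ∈ Finset.range q, g (x : ℤ) := by
  have h1 : ∑ x ∈ Finset.range (q + 1), g (x : ℤ)
      = ∑ x ∈ Finset.range q, g ((x : ℤ) + 1) + g 0 := by
    rw [Finset.sum_range_succ']
    push_cast
    ring
  have h2 : ∑ x ∈ Finset.range (q + 1), g (x : ℤ)
      = ∑ x ∈ Finset.range q, g (x : ℤ) + g (q : ℤ) := Finset.sum_range_succ _ _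
  have h3 : g (q : ℤ) = g 0 := by simpa using hg 0
  rw [h2, h3] at h1
  linear_combination -h1

lemma sum_shift (q : ℕ) (g : ℤ → ℂ) (hg : ∀ t : ℤ, g (t + q) = g t) (y : ℕ) :
    ∑ x ∈ Finset.range q, g ((x : ℤ) + (y : ℤ)) = ∑ x ∈ Finset.range q, g (x : ℤ) := by
  induction y with
  | zero => simp
  | succ n ih =>
      have key := sum_shift1 q (fun t => g (t + n))
        (fun t => by simpa [add_right_comm] using hg (t + n))
      push_cast
      calc ∑ x ∈ Finset.range q, g ((x : ℤ) + ((n : ℤ) + 1))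
          = ∑ x ∈ Finset.range q, g (((x : ℤ) + 1) + (n : ℤ)) := by
            apply Finset.sum_congr rfl; intro i _; congr 1; ring
        _ = ∑ x ∈ Finset.range q, g ((x : ℤ) + (n : ℤ)) := key
        _ = _ := ih

lemma card_dvd_le (q : ℕ) (hq : 0 < q) (hodd : Odd q) (A r : ℤ) (hr : IsCoprime (q : ℤ) r) :
    ((Finset.range q).filter (fun h : ℕ => (q : ℤ) ∣ 2 * r * A * (h : ℤ))).card
      ≤ Int.gcd (q : ℤ) A := by
  set a := A.natAbs with hadef
  have hgcd : Int.gcd (q : ℤ) A = Nat.gcd q a := by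
    simp [Int.gcd, hadef]
  set g := Nat.gcd q a with hgdef
  have hgpos : 0 < g := Nat.gcd_pos_of_pos_left _ hq
  have hgdvd : g ∣ q := Nat.gcd_dvd_left _ _
  set m := q / g with hmdef
  have hmq : m * g = q := Nat.div_mul_cancel hgdvd
  have hmpos : 0 < m := Nat.div_pos (Nat.le_of_dvd hq hgdvd) hgpos
  -- coprimality q with 2r
  have hcop2 : IsCoprime (q : ℤ) 2 := by
    rw [Int.isCoprime_iff_gcd_eq_one]
    have : Nat.Coprime q 2 := Nat.coprime_two_right.2 hodd
    simpa [Int.gcd] using this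
  have hcop : IsCoprime (q : ℤ) (2 * r) := hcop2.mul_right hr
  -- every element of the filter is divisible by m
  have key : ∀ h ∈ (Finset.range q).filter (fun h : ℕ => (q : ℤ) ∣ 2 * r * A * (h : ℤ)), m ∣ h := by
    intro h hh
    rw [Finset.mem_filter] at hh
    obtain ⟨-, hdvd⟩ := hh
    have h1 : (q : ℤ) ∣ A * (h : ℤ) := by
      apply hcop.dvd_of_dvd_mul_left
      have : 2 * r * A * (h : ℤ) = 2 * r * (A * h) := by ring
      rwa [this] at hdvd
    have h2 : q ∣ a * h := by
      have := Int.natAbs_dvd_natAbs.2 h1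
      simpa [Int.natAbs_mul, hadef] using this
    -- reduce by g
    have h3 : m * g ∣ (a / g) * h * g := by
      have hag : (a / g) * g = a := Nat.div_mul_cancel (Nat.gcd_dvd_right _ _)
      calc m * g = q := hmq
        _ ∣ a * h := h2
        _ = (a / g) * h * g := by rw [mul_right_comm, hag]
    have h4 : m ∣ (a / g) * h := (Nat.mul_dvd_mul_iff_right hgpos).1 h3
    exact (Nat.coprime_div_gcd_div_gcd hgpos).dvd_of_dvd_mul_left h4
  -- subset of an image
  have hsub : (Finset.range q).filter (fun h : ℕ => (q : ℤ) ∣ 2 * r * A * (h : ℤ))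
      ⊆ (Finset.range g).image (· * m) := by
    intro h hh
    have hm := key h hh
    rw [Finset.mem_filter, Finset.mem_range] at hh
    rw [Finset.mem_image]
    refine ⟨h / m, Finset.mem_range.2 ?_, Nat.div_mul_cancel hm⟩
    rw [Nat.div_lt_iff_lt_mul hmpos]
    calc h < q := hh.1
      _ = g * m := by rw [← hmq, mul_comm]
  calc ((Finset.range q).filter _).card ≤ ((Finset.range g).image (· * m)).card :=
        Finset.card_le_card hsub
    _ ≤ g := (Finset.card_image_le).trans (by simp)
    _ = Int.gcd (q : ℤ) A := hgcd.symm

lemma sq_abs_T_le (q : ℕ) (hq : 0 < q) (hodd : Odd q) (A C ξ r : ℤ)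
    (hr : IsCoprime (q : ℤ) r) :
    ‖∑ x ∈ Finset.range q,
        eq' q (r * (A * (x : ℤ) ^ 2 + C * (x : ℤ)) - ξ * (x : ℤ))‖ ^ 2
      ≤ (q : ℝ) * (Int.gcd (q : ℤ) A : ℝ) := by
  set f : ℤ → ℤ := fun x => r * (A * x ^ 2 + C * x) - ξ * x with hf
  set T := ∑ x ∈ Finset.range q, eq' q (f (x : ℤ)) with hT
  have habs : ‖T‖ ^ 2 = ‖T * (starRingEnd ℂ) T‖ := by
    rw [norm_mul, Complex.norm_conj, sq]
  rw [habs]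
  have hconj : (starRingEnd ℂ) T = ∑ y ∈ Finset.range q, eq' q (-(f (y : ℤ))) := by
    rw [hT, map_sum]
    exact Finset.sum_congr rfl fun y _ => eq'_conj q _
  have hper : ∀ y : ℕ, ∀ t : ℤ, eq' q (f (t + q) - f (y : ℤ)) = eq' q (f t - f (y : ℤ)) := by
    intro y t
    have h1 : f (t + q) - f (y : ℤ)
        = (f t - f (y : ℤ)) + (q : ℤ) * (r * (A * (2 * t + q) + C) - ξ) := by
      simp only [hf]; ring
    rw [h1, eq'_shift q hq]
  have hexp : T * (starRingEnd ℂ) T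
      = ∑ y ∈ Finset.range q, ∑ h ∈ Finset.range q,
          eq' q (r * (A * (h : ℤ) ^ 2 + C * (h : ℤ)) - ξ * (h : ℤ))
            * eq' q ((2 * r * A * (h : ℤ)) * (y : ℤ)) := by
    rw [hconj, hT, Finset.sum_mul_sum, Finset.sum_comm]
    apply Finset.sum_congr rfl
    intro y _
    calc ∑ x ∈ Finset.range q, eq' q (f (x : ℤ)) * eq' q (-(f (y : ℤ)))
        = ∑ x ∈ Finset.range q, eq' q (f (x : ℤ) - f (y : ℤ)) := by
          apply Finset.sum_congr rfl
          intro x _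
          rw [← eq'_add, sub_eq_add_neg]
      _ = ∑ h ∈ Finset.range q, eq' q (f ((h : ℤ) + (y : ℤ)) - f (y : ℤ)) :=
          (sum_shift q (fun t => eq' q (f t - f (y : ℤ))) (hper y) y).symm
      _ = _ := by
          apply Finset.sum_congr rfl
          intro h _
          have h2 : f ((h : ℤ) + (y : ℤ)) - f (y : ℤ)
              = (r * (A * (h : ℤ) ^ 2 + C * (h : ℤ)) - ξ * (h : ℤ))
                + (2 * r * A * (h : ℤ)) * (y : ℤ) := by
            simp only [hf]; ring
          rw [h2, eq'_add]
  rw [hexp, Finset.sum_comm]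
  have hinner : ∀ h : ℕ,
      ∑ y ∈ Finset.range q,
        eq' q (r * (A * (h : ℤ) ^ 2 + C * (h : ℤ)) - ξ * (h : ℤ))
          * eq' q ((2 * r * A * (h : ℤ)) * (y : ℤ))
      = eq' q (r * (A * (h : ℤ) ^ 2 + C * (h : ℤ)) - ξ * (h : ℤ))
          * (if (q : ℤ) ∣ 2 * r * A * (h : ℤ) then (q : ℂ) else 0) := by
    intro h
    rw [← Finset.mul_sum, sum_eq' q hq]
  calc ‖∑ h ∈ Finset.range q, ∑ y ∈ Finset.range q,
          eq' q (r * (A * (h : ℤ) ^ 2 + C * (h : ℤ)) - ξ * (h : ℤ))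
            * eq' q ((2 * r * A * (h : ℤ)) * (y : ℤ))‖
      ≤ ∑ h ∈ Finset.range q, ‖∑ y ∈ Finset.range q,
          eq' q (r * (A * (h : ℤ) ^ 2 + C * (h : ℤ)) - ξ * (h : ℤ))
            * eq' q ((2 * r * A * (h : ℤ)) * (y : ℤ))‖ :=
        norm_sum_le _ _
    _ = ∑ h ∈ Finset.range q, (if (q : ℤ) ∣ 2 * r * A * (h : ℤ) then (q : ℝ) else 0) := by
        apply Finset.sum_congr rfl
        intro h _
        rw [hinner h, norm_mul, abs_eq', one_mul]
        split_ifs <;> simp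
    _ = ((Finset.range q).filter (fun h : ℕ => (q : ℤ) ∣ 2 * r * A * (h : ℤ))).card * (q : ℝ) := by
        rw [← Finset.sum_filter, Finset.sum_const, nsmul_eq_mul]
    _ ≤ (Int.gcd (q : ℤ) A : ℝ) * (q : ℝ) := by
        apply mul_le_mul_of_nonneg_right _ (by positivity)
        exact_mod_cast card_dvd_le q hq hodd A r hr
    _ = (q : ℝ) * (Int.gcd (q : ℤ) A : ℝ) := mul_comm _ _

lemma sq_abs_Snorm_le (q : ℕ) (hq : 0 < q) (hodd : Odd q) (A B C D ξ ζ r : ℤ)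
    (hr : IsCoprime (q : ℤ) r) :
    ‖Snorm q A B C D ξ ζ r‖ ^ 2
      ≤ (Int.gcd (q : ℤ) A : ℝ) * (Int.gcd (q : ℤ) B : ℝ) / (q : ℝ) ^ 2 := by
  have hfact : Snorm q A B C D ξ ζ r
      = ((q : ℂ) ^ 2)⁻¹
        * ((∑ x ∈ Finset.range q, eq' q (r * (A * (x : ℤ) ^ 2 + C * (x : ℤ)) - ξ * (x : ℤ)))
          * (∑ y ∈ Finset.range q, eq' q (r * (B * (y : ℤ) ^ 2 + D * (y : ℤ)) - ζ * (y : ℤ)))) := by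
    rw [Snorm, Finset.sum_mul_sum]
  set TA := ∑ x ∈ Finset.range q, eq' q (r * (A * (x : ℤ) ^ 2 + C * (x : ℤ)) - ξ * (x : ℤ))
  set TB := ∑ y ∈ Finset.range q, eq' q (r * (B * (y : ℤ) ^ 2 + D * (y : ℤ)) - ζ * (y : ℤ))
  have hq' : (0 : ℝ) < (q : ℝ) := by exact_mod_cast hq
  have h1 : ‖Snorm q A B C D ξ ζ r‖ ^ 2
      = ((q : ℝ) ^ 2)⁻¹ ^ 2 * (‖TA‖ ^ 2 * ‖TB‖ ^ 2) := by
    rw [hfact, norm_mul, norm_mul, norm_inv, norm_pow, Complex.norm_natCast]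
    ring
  rw [h1]
  have hA := sq_abs_T_le q hq hodd A C ξ r hr
  have hB := sq_abs_T_le q hq hodd B D ζ r hr
  have hTA : (0 : ℝ) ≤ ‖TA‖ ^ 2 := by positivity
  have hTB : (0 : ℝ) ≤ ‖TB‖ ^ 2 := by positivity
  calc ((q : ℝ) ^ 2)⁻¹ ^ 2 * (‖TA‖ ^ 2 * ‖TB‖ ^ 2)
      ≤ ((q : ℝ) ^ 2)⁻¹ ^ 2 * (((q : ℝ) * (Int.gcd (q : ℤ) A : ℝ))
          * ((q : ℝ) * (Int.gcd (q : ℤ) B : ℝ))) := by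
        apply mul_le_mul_of_nonneg_left _ (by positivity)
        exact mul_le_mul hA hB hTB (by positivity)
    _ = (Int.gcd (q : ℤ) A : ℝ) * (Int.gcd (q : ℤ) B : ℝ) / (q : ℝ) ^ 2 := by
        field_simp

lemma gcd_mul_le (q 𝔇 : ℕ) (hq : 0 < q) (h𝔇 : 1 ≤ 𝔇) (A : ℤ) :
    Int.gcd (q : ℤ) ((𝔇 : ℤ) * A) ≤ 𝔇 * Int.gcd (q : ℤ) A := by
  have h1 : Int.gcd (q : ℤ) ((𝔇 : ℤ) * A) = Nat.gcd q (𝔇 * A.natAbs) := by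
    simp [Int.gcd, Int.natAbs_mul]
  have h2 : Int.gcd (q : ℤ) A = Nat.gcd q A.natAbs := by simp [Int.gcd]
  rw [h1, h2]
  have hdvd : Nat.gcd q (𝔇 * A.natAbs) ∣ Nat.gcd q 𝔇 * Nat.gcd q A.natAbs :=
    gcd_mul_dvd_mul_gcd q 𝔇 A.natAbs
  have hpos : 0 < Nat.gcd q 𝔇 * Nat.gcd q A.natAbs := by
    have := Nat.gcd_pos_of_pos_left (𝔇) hq
    have := Nat.gcd_pos_of_pos_left (A.natAbs) hq
    positivity
  calc Nat.gcd q (𝔇 * A.natAbs) ≤ Nat.gcd q 𝔇 * Nat.gcd q A.natAbs := Nat.le_of_dvd hpos hdvd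
    _ ≤ 𝔇 * Nat.gcd q A.natAbs := by
        apply Nat.mul_le_mul_right
        exact Nat.le_of_dvd (by omega) (Nat.gcd_dvd_right _ _)


/-- For `𝔇 ≥ 1` and odd positive `q`, `|S(q)| ≤ 𝔇 · gcd(q,A) · gcd(q,A')/q`. -/
theorem averaged_sum_trivial_bound (𝔇 : ℕ) (h𝔇 : 1 ≤ 𝔇) (q : ℕ) (hq : Odd q)
    (hq0 : 0 < q) (c₁ c₂ d₁ d₂ c₁' c₂' d₁' d₂' ξ ζ ξ' ζ' : ℤ) :
    ‖Savg 𝔇 c₁ c₂ d₁ d₂ c₁' c₂' d₁' d₂' ξ ζ ξ' ζ' q‖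
      ≤ (𝔇 : ℝ) * (Int.gcd (q : ℤ) (coA 𝔇 c₁ c₂) : ℝ)
          * (Int.gcd (q : ℤ) (coA 𝔇 c₁' c₂') : ℝ) / (q : ℝ) := by
  set A := coA 𝔇 c₁ c₂ with hA
  set A' := coA 𝔇 c₁' c₂' with hA'
  set gA : ℝ := (Int.gcd (q : ℤ) A : ℝ) with hgA
  set gA' : ℝ := (Int.gcd (q : ℤ) A' : ℝ) with hgA'
  have hqR : (0 : ℝ) < (q : ℝ) := by exact_mod_cast hq0
  have hgApos : (0 : ℝ) ≤ gA := by positivity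
  have hgA'pos : (0 : ℝ) ≤ gA' := by positivity
  set Y : ℝ := (𝔇 : ℝ) * gA * gA' / (q : ℝ) ^ 2 with hY
  have hYpos : (0 : ℝ) ≤ Y := by positivity
  -- bound each term
  have hterm : ∀ r ∈ (Finset.range q).filter (fun r => Nat.Coprime r q),
      ‖Snorm q A ((𝔇 : ℤ) * A) (coC 𝔇 c₁ c₂ d₁ d₂) (coD 𝔇 c₁ c₂ d₁ d₂) ξ ζ (r : ℤ)
        * (starRingEnd ℂ) (Snorm q A' ((𝔇 : ℤ) * A') (coC 𝔇 c₁' c₂' d₁' d₂')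
            (coD 𝔇 c₁' c₂' d₁' d₂') ξ' ζ' (r : ℤ))
        * eq' q ((coE 𝔇 c₁ c₂ d₁ d₂ - coE 𝔇 c₁' c₂' d₁' d₂') * (r : ℤ))‖ ≤ Y := by
    intro r hr
    rw [Finset.mem_filter] at hr
    have hcop : IsCoprime (q : ℤ) (r : ℤ) := by
      rw [Int.isCoprime_iff_gcd_eq_one]
      simpa [Int.gcd] using (Nat.coprime_comm.mp hr.2)
    set S := Snorm q A ((𝔇 : ℤ) * A) (coC 𝔇 c₁ c₂ d₁ d₂) (coD 𝔇 c₁ c₂ d₁ d₂) ξ ζ (r : ℤ)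
    set S' := Snorm q A' ((𝔇 : ℤ) * A') (coC 𝔇 c₁' c₂' d₁' d₂') (coD 𝔇 c₁' c₂' d₁' d₂') ξ' ζ' (r : ℤ)
    have habs : ‖S * (starRingEnd ℂ) S'
        * eq' q ((coE 𝔇 c₁ c₂ d₁ d₂ - coE 𝔇 c₁' c₂' d₁' d₂') * (r : ℤ))‖
        = ‖S‖ * ‖S'‖ := by
      rw [norm_mul, norm_mul, Complex.norm_conj, abs_eq', mul_one]
    rw [habs]
    -- square comparison
    have hS := sq_abs_Snorm_le q hq0 hq A ((𝔇 : ℤ) * A) (coC 𝔇 c₁ c₂ d₁ d₂)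
      (coD 𝔇 c₁ c₂ d₁ d₂) ξ ζ (r : ℤ) hcop
    have hS' := sq_abs_Snorm_le q hq0 hq A' ((𝔇 : ℤ) * A') (coC 𝔇 c₁' c₂' d₁' d₂')
      (coD 𝔇 c₁' c₂' d₁' d₂') ξ' ζ' (r : ℤ) hcop
    have hB : (Int.gcd (q : ℤ) ((𝔇 : ℤ) * A) : ℝ) ≤ (𝔇 : ℝ) * gA := by
      rw [hgA]
      exact_mod_cast gcd_mul_le q 𝔇 hq0 h𝔇 A
    have hB' : (Int.gcd (q : ℤ) ((𝔇 : ℤ) * A') : ℝ) ≤ (𝔇 : ℝ) * gA' := by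
      rw [hgA']
      exact_mod_cast gcd_mul_le q 𝔇 hq0 h𝔇 A'
    have hsq : (‖S‖ * ‖S'‖) ^ 2 ≤ Y ^ 2 := by
      have e1 : (‖S‖ * ‖S'‖) ^ 2
          = ‖S‖ ^ 2 * ‖S'‖ ^ 2 := by ring
      rw [e1]
      calc ‖S‖ ^ 2 * ‖S'‖ ^ 2
          ≤ (gA * (Int.gcd (q : ℤ) ((𝔇 : ℤ) * A) : ℝ) / (q : ℝ) ^ 2)
            * (gA' * (Int.gcd (q : ℤ) ((𝔇 : ℤ) * A') : ℝ) / (q : ℝ) ^ 2) := by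
            apply mul_le_mul hS hS' (by positivity) ?_
            positivity
        _ ≤ (gA * ((𝔇 : ℝ) * gA) / (q : ℝ) ^ 2) * (gA' * ((𝔇 : ℝ) * gA') / (q : ℝ) ^ 2) := by
            gcongr
        _ = Y ^ 2 := by rw [hY]; ring
    calc ‖S‖ * ‖S'‖
        = Real.sqrt ((‖S‖ * ‖S'‖) ^ 2) :=
          (Real.sqrt_sq (by positivity)).symm
      _ ≤ Real.sqrt (Y ^ 2) := Real.sqrt_le_sqrt hsq
      _ = Y := Real.sqrt_sq hYpos
  -- sum up
  calc ‖Savg 𝔇 c₁ c₂ d₁ d₂ c₁' c₂' d₁' d₂' ξ ζ ξ' ζ' q‖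
      ≤ ∑ r ∈ (Finset.range q).filter (fun r => Nat.Coprime r q),
          ‖Snorm q A ((𝔇 : ℤ) * A) (coC 𝔇 c₁ c₂ d₁ d₂)
              (coD 𝔇 c₁ c₂ d₁ d₂) ξ ζ (r : ℤ)
            * (starRingEnd ℂ) (Snorm q A' ((𝔇 : ℤ) * A') (coC 𝔇 c₁' c₂' d₁' d₂')
                (coD 𝔇 c₁' c₂' d₁' d₂') ξ' ζ' (r : ℤ))
            * eq' q ((coE 𝔇 c₁ c₂ d₁ d₂ - coE 𝔇 c₁' c₂' d₁' d₂') * (r : ℤ))‖ := by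
        rw [Savg]
        exact norm_sum_le _ _
    _ ≤ ∑ _r ∈ (Finset.range q).filter (fun r => Nat.Coprime r q), Y :=
        Finset.sum_le_sum hterm
    _ = ((Finset.range q).filter (fun r => Nat.Coprime r q)).card * Y := by
        rw [Finset.sum_const, nsmul_eq_mul]
    _ ≤ (q : ℝ) * Y := by
        apply mul_le_mul_of_nonneg_right _ hYpos
        have := (Finset.card_filter_le (Finset.range q) (fun r => Nat.Coprime r q)).trans
          (le_of_eq (Finset.card_range q))
        exact_mod_cast this
    _ = (𝔇 : ℝ) * gA * gA' / (q : ℝ) := by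
        rw [hY]
        field_simp
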